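/- arXiv:1708.07464 — 3 statements merged into one kernel-verified Lean document; each statement's English description precedes it below -/
import Mathlib

section
/- The ℚ-vector space Z_q[1] equals the ℚ-span of the Bradley–Zhao model: Z_q[1] = ⟨ ζ^BZ_q(s_1,…,s_l) : l ≥ 0, s_1 ≥ 2, s_2,…,s_l ≥ 1 ⟩_ℚ, where ζ^BZ_q(s_1,…,s_l) := ζ_q(s_1,…,s_l; t^{s_1−1},…,t^{s_l−1}) = Σ_{n_1>⋯>n_l>0} q^{(s_1−1)n_1}⋯q^{(s_l−1)n_l} / ((1−q^{n_1})^{s_1}⋯(1−q^{n_l})^{s_l}). -/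
/-- The q-analogue ζ_q(s_1,…,s_l;Q_1,…,Q_l) ∈ ℚ[[q]], defined coefficientwise:
the coefficient of q^m is the (convergent, since each summand with n_1 > m
contributes 0 once Q_1 has no constant term) sum over strictly decreasing tuples
n_1 > ⋯ > n_l > 0 of the coefficient of q^m in
Q_1(q^{n_1})⋯Q_l(q^{n_l}) / ((1−q^{n_1})^{s_1}⋯(1−q^{n_l})^{s_l}). -/
noncomputable def zetaQ (l : ℕ) (s : Fin l → ℕ) (Q : Fin l → Polynomial ℚ) : PowerSeries ℚ :=
  PowerSeries.mk fun m =>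
    ∑' n : {n : Fin l → ℕ // StrictAnti n ∧ ∀ i, 0 < n i},
      PowerSeries.coeff m
        (∏ j, Polynomial.aeval (PowerSeries.X ^ (n.1 j)) (Q j) *
          ((1 - PowerSeries.X ^ (n.1 j))⁻¹) ^ (s j))

/-- Z_q[1]: the ℚ-span of the ζ_q(s_1,…,s_l;Q_1,…,Q_l) with l ≥ 0, all s_j ≥ 1,
deg Q_j ≤ s_j − 1 (i.e. Q_j = 0 or natDegree Q_j + 1 ≤ s_j) and Q_1 ∈ tℚ[t]. -/
noncomputable def Zq1 : Submodule ℚ (PowerSeries ℚ) :=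
  Submodule.span ℚ {f | ∃ (l : ℕ) (s : Fin l → ℕ) (Q : Fin l → Polynomial ℚ),
    (∀ j, 1 ≤ s j) ∧ (∀ j, Q j = 0 ∨ (Q j).natDegree + 1 ≤ s j) ∧
    (∀ h : 0 < l, (Q ⟨0, h⟩).coeff 0 = 0) ∧ f = zetaQ l s Q}

open Polynomial in
lemma poly_decomp : ∀ (s : ℕ) (Q : Polynomial ℚ), (Q = 0 ∨ Q.natDegree + 1 ≤ s) →
    ∃ c : ℕ → ℚ, c 0 = Q.coeff 0 ∧
      Q = ∑ i ∈ Finset.range s, C (c i) * X ^ i * (1 - X) ^ (s - 1 - i) := by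
  intro s
  induction s with
  | zero =>
    intro Q hQ
    refine ⟨fun _ => 0, ?_, ?_⟩
    · rcases hQ with h | h
      · simp [h]
      · omega
    · rcases hQ with h | h
      · simp [h]
      · omega
  | succ s ih =>
    intro Q hQ
    set P : Polynomial ℚ := Q - C (Q.coeff 0) * (1 - X) ^ s with hP
    have hP0 : P.coeff 0 = 0 := by
      have : ((1 - X : Polynomial ℚ) ^ s).coeff 0 = 1 := by
        rw [Polynomial.coeff_zero_eq_eval_zero]
        simp
      simp [hP, Polynomial.coeff_sub, Polynomial.coeff_C_mul, this]
    set R := P.divX with hR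
    have hPX : P = X * R := by
      have := Polynomial.X_mul_divX_add P
      rw [hP0] at this
      simpa using this.symm
    have hPdeg : P.natDegree ≤ s := by
      apply Polynomial.natDegree_sub_le_iff_left _ |>.mpr
      · rcases hQ with h | h
        · simp [h]
        · omega
      · calc (C (Q.coeff 0) * (1 - X) ^ s).natDegree ≤ (C (Q.coeff 0)).natDegree + ((1-X:Polynomial ℚ)^s).natDegree := Polynomial.natDegree_mul_le
          _ ≤ 0 + s * 1 := by
              gcongr
              · simp
              · exact Polynomial.natDegree_pow_le.trans (by gcongr; exact (Polynomial.natDegree_sub_le _ _).trans (by simp))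
          _ = s := by omega
    have hRdeg : R = 0 ∨ R.natDegree + 1 ≤ s := by
      by_cases hR0 : R = 0
      · left; exact hR0
      · right
        have : P.natDegree = R.natDegree + 1 := by
          rw [hPX, Polynomial.natDegree_mul (Polynomial.X_ne_zero) hR0]
          simp [add_comm]
        omega
    obtain ⟨c', hc'0, hc'⟩ := ih R hRdeg
    refine ⟨fun i => if i = 0 then Q.coeff 0 else c' (i - 1), by simp, ?_⟩
    rw [Finset.sum_range_succ']
    have h1 : ∀ i ∈ Finset.range s,
        C (if i + 1 = 0 then Q.coeff 0 else c' (i + 1 - 1)) * X ^ (i+1) * (1 - X : Polynomial ℚ) ^ (s + 1 - 1 - (i+1))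
        = X * (C (c' i) * X ^ i * (1 - X) ^ (s - 1 - i)) := by
      intro i hi
      have : s + 1 - 1 - (i+1) = s - 1 - i := by omega
      rw [this]
      simp
      ring
    rw [Finset.sum_congr rfl h1, ← Finset.mul_sum, ← hc', ← hPX]
    simp only [hP, if_true]
    rw [show s + 1 - 1 - 0 = s by omega]
    ring

lemma unit_pow_eq {n : ℕ} (hn : 0 < n) {k s : ℕ} (hk : k ≤ s) :
    (1 - PowerSeries.X ^ n : PowerSeries ℚ) ^ (s - k) * ((1 - PowerSeries.X ^ n : PowerSeries ℚ)⁻¹) ^ s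
      = ((1 - PowerSeries.X ^ n : PowerSeries ℚ)⁻¹) ^ k := by
  have hu : PowerSeries.constantCoeff (1 - PowerSeries.X ^ n : PowerSeries ℚ) ≠ 0 := by
    have h : PowerSeries.constantCoeff (PowerSeries.X ^ n : PowerSeries ℚ) = 0 := by
      rw [map_pow, PowerSeries.constantCoeff_X, zero_pow hn.ne']
    simp [map_sub, h]
  have hmul : (1 - PowerSeries.X ^ n : PowerSeries ℚ) * (1 - PowerSeries.X ^ n : PowerSeries ℚ)⁻¹ = 1 :=
    PowerSeries.mul_inv_cancel _ hu
  calc (1 - PowerSeries.X ^ n : PowerSeries ℚ) ^ (s - k) * ((1 - PowerSeries.X ^ n : PowerSeries ℚ)⁻¹) ^ s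
      = ((1 - PowerSeries.X ^ n : PowerSeries ℚ) * (1 - PowerSeries.X ^ n : PowerSeries ℚ)⁻¹) ^ (s - k)
          * ((1 - PowerSeries.X ^ n : PowerSeries ℚ)⁻¹) ^ k := by
        rw [mul_pow, mul_assoc, ← pow_add, Nat.sub_add_cancel hk]
    _ = ((1 - PowerSeries.X ^ n : PowerSeries ℚ)⁻¹) ^ k := by rw [hmul, one_pow, one_mul]

lemma factor_eq {s : ℕ} {c : ℕ → ℚ} {Q : Polynomial ℚ}
    (hQ : Q = ∑ i ∈ Finset.range s,
      Polynomial.C (c i) * Polynomial.X ^ i * (1 - Polynomial.X) ^ (s - 1 - i))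
    {n : ℕ} (hn : 0 < n) :
    Polynomial.aeval (PowerSeries.X ^ n : PowerSeries ℚ) Q *
        ((1 - PowerSeries.X ^ n : PowerSeries ℚ)⁻¹) ^ s
      = ∑ i ∈ Finset.range s, algebraMap ℚ (PowerSeries ℚ) (c i) *
          ((PowerSeries.X ^ n : PowerSeries ℚ) ^ i *
            ((1 - PowerSeries.X ^ n : PowerSeries ℚ)⁻¹) ^ (i + 1)) := by
  rw [hQ, map_sum, Finset.sum_mul]
  refine Finset.sum_congr rfl fun i hi => ?_
  have hi' : i + 1 ≤ s := Finset.mem_range.mp hi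
  have h1 : s - 1 - i = s - (i + 1) := by omega
  rw [map_mul, map_mul, map_pow, map_pow, map_sub, map_one, Polynomial.aeval_X,
    Polynomial.aeval_C, h1]
  have key := unit_pow_eq hn hi' (s := s) (k := i + 1)
  linear_combination (algebraMap ℚ (PowerSeries ℚ) (c i) * (PowerSeries.X ^ n : PowerSeries ℚ) ^ i) * key

lemma coeff_vanish {l : ℕ} (s : Fin l → ℕ) (Q : Fin l → Polynomial ℚ) (i0 : Fin l)
    (h0 : (Q i0).coeff 0 = 0) (n : Fin l → ℕ) {m : ℕ} (hm : m < n i0) :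
    PowerSeries.coeff m (∏ j, Polynomial.aeval (PowerSeries.X ^ (n j) : PowerSeries ℚ) (Q j) *
      ((1 - PowerSeries.X ^ (n j) : PowerSeries ℚ)⁻¹) ^ (s j)) = 0 := by
  have hQ : Q i0 = Polynomial.X * (Q i0).divX := by
    have h := Polynomial.X_mul_divX_add (Q i0)
    rw [h0, map_zero, add_zero] at h
    exact h.symm
  have hdvd1 : (PowerSeries.X ^ (n i0) : PowerSeries ℚ) ∣
      Polynomial.aeval (PowerSeries.X ^ (n i0) : PowerSeries ℚ) (Q i0) := by
    rw [hQ, map_mul, Polynomial.aeval_X]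
    exact Dvd.intro _ rfl
  have hdvd : (PowerSeries.X ^ (n i0) : PowerSeries ℚ) ∣
      ∏ j, Polynomial.aeval (PowerSeries.X ^ (n j) : PowerSeries ℚ) (Q j) *
        ((1 - PowerSeries.X ^ (n j) : PowerSeries ℚ)⁻¹) ^ (s j) :=
    dvd_trans (hdvd1.mul_right _) (Finset.dvd_prod_of_mem _ (Finset.mem_univ i0))
  exact PowerSeries.X_pow_dvd_iff.mp hdvd m hm

lemma zetaQ_repr {l : ℕ} (hl : 0 < l) (s : Fin l → ℕ) (Q : Fin l → Polynomial ℚ)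
    (c : Fin l → ℕ → ℚ)
    (hc : ∀ j, Q j = ∑ i ∈ Finset.range (s j),
      Polynomial.C (c j i) * Polynomial.X ^ i * (1 - Polynomial.X) ^ (s j - 1 - i))
    (hQ0 : (Q ⟨0, hl⟩).coeff 0 = 0) (hc0 : c ⟨0, hl⟩ 0 = 0) :
    zetaQ l s Q = ∑ k ∈ (Fintype.piFinset fun j => Finset.range (s j)).filter
        (fun k => k ⟨0, hl⟩ ≠ 0),
      (∏ j, c j (k j)) • zetaQ l (fun j => k j + 1) (fun j => Polynomial.X ^ (k j)) := by
  classical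
  set i0 : Fin l := ⟨0, hl⟩
  set K := Fintype.piFinset fun j => Finset.range (s j) with hK
  set K' := K.filter (fun k => k i0 ≠ 0) with hK'
  ext m
  rw [map_sum]
  simp only [zetaQ, PowerSeries.coeff_mk, map_smul, smul_eq_mul]
  set S' : Finset {n : Fin l → ℕ // StrictAnti n ∧ ∀ i, 0 < n i} :=
    Finset.subtype _ (Fintype.piFinset fun _ => Finset.Iic m) with hS'
  have hmem : ∀ (nn : {n : Fin l → ℕ // StrictAnti n ∧ ∀ i, 0 < n i}), nn ∉ S' → m < nn.1 i0 := by
    intro nn hnn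
    rw [hS', Finset.mem_subtype, Fintype.mem_piFinset] at hnn
    push_neg at hnn
    obtain ⟨j, hj⟩ := hnn
    rw [Finset.mem_Iic] at hj
    push_neg at hj
    have hle : nn.1 j ≤ nn.1 i0 := nn.2.1.antitone (by simp [i0, Fin.le_def])
    omega
  -- LHS tsum as finite sum
  rw [tsum_eq_sum (s := S') (fun b hb => coeff_vanish s Q i0 hQ0 b.1 (hmem b hb))]
  -- each BZ tsum as finite sum
  have hBZ : ∀ k ∈ K', (∑' nn : {n : Fin l → ℕ // StrictAnti n ∧ ∀ i, 0 < n i},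
      PowerSeries.coeff m (∏ j, Polynomial.aeval (PowerSeries.X ^ (nn.1 j))
        ((Polynomial.X : Polynomial ℚ) ^ (k j)) *
        ((1 - PowerSeries.X ^ (nn.1 j))⁻¹) ^ (k j + 1)))
      = ∑ nn ∈ S', PowerSeries.coeff m (∏ j,
          (PowerSeries.X ^ (nn.1 j) : PowerSeries ℚ) ^ (k j) *
          ((1 - PowerSeries.X ^ (nn.1 j))⁻¹) ^ (k j + 1)) := by
    intro k hk
    have h0 : ((Polynomial.X : Polynomial ℚ) ^ (k i0)).coeff 0 = 0 := by
      rw [Polynomial.coeff_X_pow]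
      have hne : k i0 ≠ 0 := (Finset.mem_filter.mp hk).2
      simp [Ne.symm hne]
    rw [tsum_eq_sum (s := S') (fun b hb =>
      coeff_vanish (fun j => k j + 1) (fun j => Polynomial.X ^ (k j)) i0 h0 b.1 (hmem b hb))]
    refine Finset.sum_congr rfl fun nn _ => ?_
    congr 1
    refine Finset.prod_congr rfl fun j _ => ?_
    rw [map_pow, Polynomial.aeval_X]
  refine Eq.trans ?_ (Finset.sum_congr rfl fun k hk => congrArg _ (hBZ k hk).symm)
  -- pointwise expansion of the product
  have hpt : ∀ nn : {n : Fin l → ℕ // StrictAnti n ∧ ∀ i, 0 < n i},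
      PowerSeries.coeff m (∏ j, Polynomial.aeval (PowerSeries.X ^ (nn.1 j)) (Q j) *
        ((1 - PowerSeries.X ^ (nn.1 j))⁻¹) ^ (s j))
      = ∑ k ∈ K, (∏ j, c j (k j)) *
          PowerSeries.coeff m (∏ j, (PowerSeries.X ^ (nn.1 j) : PowerSeries ℚ) ^ (k j) *
            ((1 - PowerSeries.X ^ (nn.1 j))⁻¹) ^ (k j + 1)) := by
    intro nn
    have h1 : (∏ j, Polynomial.aeval (PowerSeries.X ^ (nn.1 j)) (Q j) *
        ((1 - PowerSeries.X ^ (nn.1 j))⁻¹) ^ (s j))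
        = ∏ j, ∑ i ∈ Finset.range (s j), algebraMap ℚ (PowerSeries ℚ) (c j i) *
            ((PowerSeries.X ^ (nn.1 j) : PowerSeries ℚ) ^ i *
              ((1 - PowerSeries.X ^ (nn.1 j))⁻¹) ^ (i + 1)) :=
      Finset.prod_congr rfl fun j _ => factor_eq (hc j) (nn.2.2 j)
    rw [h1, Finset.prod_univ_sum, map_sum]
    refine Finset.sum_congr rfl fun k _ => ?_
    rw [Finset.prod_mul_distrib, ← map_prod, ← Algebra.smul_def, map_smul, smul_eq_mul]
  rw [Finset.sum_congr rfl fun nn _ => hpt nn, Finset.sum_comm]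
  -- restrict K to K'
  have hvan : ∀ k ∈ K, k ∉ K' → (∑ nn ∈ S', (∏ j, c j (k j)) *
      PowerSeries.coeff m (∏ j, (PowerSeries.X ^ (nn.1 j) : PowerSeries ℚ) ^ (k j) *
        ((1 - PowerSeries.X ^ (nn.1 j))⁻¹) ^ (k j + 1))) = 0 := by
    intro k hkK hk
    have hk0 : k i0 = 0 := by
      by_contra h
      exact hk (Finset.mem_filter.mpr ⟨hkK, h⟩)
    have hz : (∏ j, c j (k j)) = 0 :=
      Finset.prod_eq_zero (Finset.mem_univ i0) (by rw [hk0, hc0])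
    simp [hz]
  rw [← Finset.sum_subset (Finset.filter_subset _ _) hvan]
  exact Finset.sum_congr rfl fun k _ => (Finset.mul_sum _ _ _).symm

lemma zetaQ_l_zero (s : Fin 0 → ℕ) (Q Q' : Fin 0 → Polynomial ℚ) :
    zetaQ 0 s Q = zetaQ 0 s Q' := by
  unfold zetaQ
  congr 1

/-- Z_q[1] equals the ℚ-span of the Bradley–Zhao model
ζ^BZ_q(s_1,…,s_l) = ζ_q(s_1,…,s_l; t^{s_1−1},…,t^{s_l−1}) with s_1 ≥ 2, s_2,…,s_l ≥ 1. -/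
theorem Zq1_eq_span_BradleyZhao :
    Zq1 = Submodule.span ℚ {f | ∃ (l : ℕ) (s : Fin l → ℕ),
      (∀ j, 1 ≤ s j) ∧ (∀ h : 0 < l, 2 ≤ s ⟨0, h⟩) ∧
      f = zetaQ l s (fun j => Polynomial.X ^ (s j - 1))} := by
  apply le_antisymm
  · rw [Zq1, Submodule.span_le]
    rintro f ⟨l, s, Q, hs, hdeg, hQ0, rfl⟩
    rcases Nat.eq_zero_or_pos l with hl0 | hl
    · subst hl0
      apply Submodule.subset_span
      refine ⟨0, s, fun j => j.elim0, fun h => absurd h (by omega), ?_⟩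
      exact zetaQ_l_zero s Q _
    · choose c hc0 hc using fun j => poly_decomp (s j) (Q j) (hdeg j)
      rw [zetaQ_repr hl s Q c hc (hQ0 hl) (by rw [hc0]; exact hQ0 hl)]
      apply Submodule.sum_mem
      intro k hk
      apply Submodule.smul_mem
      apply Submodule.subset_span
      refine ⟨l, fun j => k j + 1, ?_, ?_, ?_⟩
      · intro j
        show 1 ≤ k j + 1
        omega
      · intro h
        show 2 ≤ k ⟨0, h⟩ + 1
        have h2 : k ⟨0, h⟩ ≠ 0 := (Finset.mem_filter.mp hk).2
        omega
      · rfl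
  · rw [Submodule.span_le]
    rintro f ⟨l, s, hs, hs2, rfl⟩
    apply Submodule.subset_span
    refine ⟨l, s, fun j => Polynomial.X ^ (s j - 1), hs, ?_, ?_, rfl⟩
    · intro j
      right
      rw [Polynomial.natDegree_X_pow]
      have := hs j
      omega
    · intro h
      rw [Polynomial.coeff_X_pow]
      have := hs2 h
      have hne : (0 : ℕ) ≠ s ⟨0, h⟩ - 1 := by omega
      simp [hne]
end

section
/- Let ζ^SZ_q(s_1,…,s_l) = Σ_{n_1>⋯>n_l>0} q^{n_1s_1}⋯q^{n_ls_l} / ((1−q^{n_1})^{s_1}⋯(1−q^{n_l})^{s_l}) ∈ ℚ[[q]] for integers s_1 ≥ 1, s_2,…,s_l ≥ 0 (a factor with s_j = 0 being equal to 1). Then Z_q = ⟨ ζ^SZ_q(s_1,…,s_l) : l ≥ 0, s_1 ≥ 1, s_2,…,s_l ≥ 0 ⟩_ℚ and Z_q° = ⟨ ζ^SZ_q(s_1,…,s_l) : l ≥ 0, s_1,…,s_l ≥ 1 ⟩_ℚ. -/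
/-- The Schlesinger–Zudilin model:
ζ^SZ_q(s_1,…,s_l) = Σ_{n_1>⋯>n_l>0} q^{n_1s_1}⋯q^{n_ls_l}/((1−q^{n_1})^{s_1}⋯(1−q^{n_l})^{s_l})
= ζ_q(s_1,…,s_l; t^{s_1},…,t^{s_l}) (a factor with s_j = 0 equals 1). -/
noncomputable def zetaSZ (l : ℕ) (s : Fin l → ℕ) : PowerSeries ℚ :=
  zetaQ l s fun j => Polynomial.X ^ (s j)

/-- Z_q: the ℚ-span of the ζ_q(s_1,…,s_l;Q_1,…,Q_l) with l ≥ 0, all s_j ≥ 1,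
deg Q_j ≤ s_j and Q_1 ∈ tℚ[t]. -/
noncomputable def Zq : Submodule ℚ (PowerSeries ℚ) :=
  Submodule.span ℚ {f | ∃ (l : ℕ) (s : Fin l → ℕ) (Q : Fin l → Polynomial ℚ),
    (∀ j, 1 ≤ s j) ∧ (∀ j, (Q j).natDegree ≤ s j) ∧
    (∀ h : 0 < l, (Q ⟨0, h⟩).coeff 0 = 0) ∧ f = zetaQ l s Q}

/-- Z_q°: as Z_q, but with all Q_j ∈ tℚ[t]. -/
noncomputable def Zqc : Submodule ℚ (PowerSeries ℚ) :=
  Submodule.span ℚ {f | ∃ (l : ℕ) (s : Fin l → ℕ) (Q : Fin l → Polynomial ℚ),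
    (∀ j, 1 ≤ s j) ∧ (∀ j, (Q j).natDegree ≤ s j) ∧
    (∀ j, (Q j).coeff 0 = 0) ∧ f = zetaQ l s Q}

section Aux
open Finset

noncomputable abbrev B (n : ℕ) : PowerSeries ℚ := 1 - PowerSeries.X ^ n
noncomputable abbrev Finv (n : ℕ) : PowerSeries ℚ := (1 - PowerSeries.X ^ n)⁻¹

lemma hBinv {n : ℕ} (hn : 1 ≤ n) : (B n) * (Finv n) = 1 := by
  apply PowerSeries.mul_inv_cancel
  have : PowerSeries.constantCoeff (PowerSeries.X ^ n) = 0 := by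
    rw [map_pow, PowerSeries.constantCoeff_X, zero_pow (by omega)]
  simp [B, this, zero_pow (by omega : n ≠ 0)]

lemma core {R : Type*} [CommRing R] [Algebra ℚ R] (A b b' : R) (hAB : A + b = 1)
    (hb : b * b' = 1) (k s : ℕ) (hks : k ≤ s) :
    A ^ k * b' ^ s = ∑ j ∈ range (s - k + 1), (Nat.choose (s-k) j : ℚ) • (A * b') ^ (k + j) := by
  have h1 : A ^ k = ∑ j ∈ range (s - k + 1), (Nat.choose (s-k) j : ℚ) • (A ^ (k+j) * b ^ (s - k - j)) := by
    calc A ^ k = A ^ k * (A + b) ^ (s - k) := by rw [hAB]; ring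
    _ = _ := by
      rw [add_pow, Finset.mul_sum]
      apply Finset.sum_congr rfl
      intro j hj
      rw [Algebra.smul_def]
      push_cast
      rw [pow_add]
      ring
  rw [h1, Finset.sum_mul]
  apply Finset.sum_congr rfl
  intro j hj
  rw [smul_mul_assoc]
  congr 1
  simp only [Finset.mem_range, Nat.lt_succ_iff] at hj
  have hs : (k + j) + (s - k - j) = s := by omega
  have hb' : b' ^ s = b' ^ (k+j) * b' ^ (s-k-j) := by rw [← pow_add, hs]
  calc A ^ (k+j) * b ^ (s-k-j) * b' ^ s
      = (A * b')^(k+j) * (b * b') ^ (s - k - j) := by rw [hb', mul_pow, mul_pow]; ring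
    _ = (A * b') ^ (k + j) := by rw [hb, one_pow, mul_one]

open Polynomial in
noncomputable def dd (Q : Polynomial ℚ) (s i : ℕ) : ℚ :=
  ∑ k ∈ range (s+1), Q.coeff k * (if k ≤ i then ((s-k).choose (i-k) : ℚ) else 0)

lemma dd_zero (Q : Polynomial ℚ) (s : ℕ) : dd Q s 0 = Q.coeff 0 := by
  rw [dd]
  rw [Finset.sum_eq_single 0]
  · simp
  · intro k hk hk0
    rw [if_neg (by omega), mul_zero]
  · intro h; simp at h

lemma factor_expand (Q : Polynomial ℚ) (s n : ℕ) (hn : 1 ≤ n) (hQ : Q.natDegree ≤ s) :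
    Polynomial.aeval ((PowerSeries.X : PowerSeries ℚ) ^ n) Q * (Finv n) ^ s
      = ∑ i ∈ range (s+1), dd Q s i • ((PowerSeries.X : PowerSeries ℚ) ^ n * Finv n) ^ i := by
  have hB : (1 - (PowerSeries.X : PowerSeries ℚ)^n) * Finv n = 1 := hBinv hn
  have hAB : (PowerSeries.X : PowerSeries ℚ)^n + (1 - PowerSeries.X^n) = 1 := by ring
  rw [Polynomial.aeval_eq_sum_range' (lt_of_le_of_lt hQ (Nat.lt_succ_self s)), Finset.sum_mul]
  simp_rw [smul_mul_assoc, dd, Finset.sum_smul]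
  rw [Finset.sum_comm]
  apply Finset.sum_congr rfl
  intro k hk
  simp only [Finset.mem_range, Nat.lt_succ_iff] at hk
  rw [core (PowerSeries.X^n) (1 - PowerSeries.X^n) (Finv n) hAB hB k s hk, Finset.smul_sum]
  simp_rw [mul_smul, smul_comm (Q.coeff k)]
  simp_rw [ite_smul, zero_smul]
  rw [← Finset.sum_filter]
  rw [show (range (s+1)).filter (fun i => k ≤ i) = Finset.Ico k (s+1) by
    ext i; simp [Nat.lt_succ_iff]; omega]
  rw [Finset.sum_Ico_eq_sum_range]
  rw [show s + 1 - k = s - k + 1 by omega]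
  apply Finset.sum_congr rfl
  intro j hj
  rw [Nat.add_sub_cancel_left]

lemma coeff_vanish_of_X_pow {a m : ℕ} (h : m < a) (g : PowerSeries ℚ) :
    PowerSeries.coeff m ((PowerSeries.X : PowerSeries ℚ) ^ a * g) = 0 := by
  rw [PowerSeries.coeff_X_pow_mul', if_neg (by omega)]

lemma prod_vanish {l : ℕ} (f : Fin l → PowerSeries ℚ) (j0 : Fin l) {a m : ℕ} (h : m < a)
    (g : PowerSeries ℚ) (hf : f j0 = (PowerSeries.X : PowerSeries ℚ) ^ a * g) :
    PowerSeries.coeff m (∏ j, f j) = 0 := by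
  rw [← Finset.mul_prod_erase Finset.univ f (Finset.mem_univ j0), hf, mul_assoc]
  exact coeff_vanish_of_X_pow h _

abbrev Sig (l : ℕ) := {n : Fin l → ℕ // StrictAnti n ∧ ∀ i, 0 < n i}

instance sigFinite (l m : ℕ) : Finite {x : Sig l // ∀ j, x.1 j ≤ m} := by
  apply Finite.of_injective (β := Fin l → Fin (m+1))
    (f := fun x j => ⟨x.1.1 j, Nat.lt_succ_of_le (x.2 j)⟩)
  intro x y hxy
  apply Subtype.ext; apply Subtype.ext; funext j
  exact congrArg Fin.val (congrFun hxy j)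

lemma sigSetFinite (l m : ℕ) : Set.Finite {x : Sig l | ∀ j, x.1 j ≤ m} :=
  @Set.toFinite _ _ (sigFinite l m)

noncomputable def SS (l m : ℕ) : Finset (Sig l) := (sigSetFinite l m).toFinset

lemma not_mem_SS {l m : ℕ} {x : Sig l} (hx : x ∉ SS l m) :
    ∃ h : 0 < l, m < x.1 ⟨0, h⟩ := by
  simp only [SS, Set.Finite.mem_toFinset, Set.mem_setOf_eq, not_forall, not_le] at hx
  obtain ⟨j, hj⟩ := hx
  exact ⟨j.pos, lt_of_lt_of_le hj (x.2.1.antitone (by exact Fin.mk_le_of_le_val (Nat.zero_le _)))⟩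

lemma tsum_eq_SS {l m : ℕ} (f : Sig l → ℚ)
    (hf : ∀ x : Sig l, ∀ h : 0 < l, m < x.1 ⟨0, h⟩ → f x = 0) :
    ∑' x, f x = ∑ x ∈ SS l m, f x := by
  apply tsum_eq_sum
  intro x hx
  obtain ⟨h, hm⟩ := not_mem_SS hx
  exact hf x h hm

lemma coeff_zetaSZ (l m : ℕ) (i : Fin l → ℕ) :
    PowerSeries.coeff m (zetaSZ l i) =
      ∑' x : Sig l, PowerSeries.coeff m
        (∏ j, ((PowerSeries.X : PowerSeries ℚ) ^ (x.1 j) * Finv (x.1 j)) ^ (i j)) := by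
  rw [zetaSZ, zetaQ, PowerSeries.coeff_mk]
  apply tsum_congr
  intro x
  congr 1
  apply Finset.prod_congr rfl
  intro j _
  rw [map_pow, Polynomial.aeval_X, ← mul_pow]

lemma zetaQ_expand (l : ℕ) (s : Fin l → ℕ) (Q : Fin l → Polynomial ℚ)
    (hdeg : ∀ j, (Q j).natDegree ≤ s j) (h0 : ∀ h : 0 < l, (Q ⟨0, h⟩).coeff 0 = 0) :
    zetaQ l s Q = ∑ i ∈ Fintype.piFinset (fun j => range (s j + 1)),
      (∏ j, dd (Q j) (s j) (i j)) • zetaSZ l i := by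
  ext m
  rw [zetaQ, PowerSeries.coeff_mk, map_sum]
  simp_rw [PowerSeries.coeff_smul, coeff_zetaSZ, smul_eq_mul]
  -- Step A : LHS tsum to finite sum
  rw [tsum_eq_SS _ (by
    intro x h hm
    have hQ0 := h0 h
    obtain ⟨R, hR⟩ := Polynomial.X_dvd_iff.mpr hQ0
    apply prod_vanish _ ⟨0, h⟩ hm
      (Polynomial.aeval ((PowerSeries.X : PowerSeries ℚ) ^ (x.1 ⟨0,h⟩)) R *
        (Finv (x.1 ⟨0,h⟩)) ^ (s ⟨0,h⟩))
    rw [hR, map_mul, Polynomial.aeval_X, mul_assoc])]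
  -- Step B : expand each summand
  have hstep : ∀ x ∈ SS l m,
      PowerSeries.coeff m (∏ j, Polynomial.aeval (PowerSeries.X ^ (x.1 j)) (Q j) *
          ((1 - PowerSeries.X ^ (x.1 j))⁻¹) ^ (s j)) =
      ∑ i ∈ Fintype.piFinset (fun j => range (s j + 1)),
        (∏ j, dd (Q j) (s j) (i j)) * PowerSeries.coeff m
          (∏ j, ((PowerSeries.X : PowerSeries ℚ) ^ ((x : Sig l).1 j) * Finv ((x : Sig l).1 j)) ^ (i j)) := by
    intro x _
    have : (∏ j, Polynomial.aeval ((PowerSeries.X : PowerSeries ℚ) ^ (x.1 j)) (Q j) *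
          ((1 - PowerSeries.X ^ (x.1 j))⁻¹) ^ (s j)) =
        ∑ i ∈ Fintype.piFinset (fun j => range (s j + 1)),
          (∏ j, dd (Q j) (s j) (i j)) •
            ∏ j, ((PowerSeries.X : PowerSeries ℚ) ^ (x.1 j) * Finv (x.1 j)) ^ (i j) := by
      rw [show (∏ j, Polynomial.aeval ((PowerSeries.X : PowerSeries ℚ) ^ (x.1 j)) (Q j) *
          ((1 - PowerSeries.X ^ (x.1 j))⁻¹) ^ (s j)) =
        ∏ j, ∑ i ∈ range (s j + 1), dd (Q j) (s j) i •
          ((PowerSeries.X : PowerSeries ℚ) ^ (x.1 j) * Finv (x.1 j)) ^ i from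
        Finset.prod_congr rfl fun j _ => factor_expand (Q j) (s j) (x.1 j) (x.2.2 j) (hdeg j)]
      rw [Finset.prod_univ_sum]
      apply Finset.sum_congr rfl
      intro i _
      simp_rw [Algebra.smul_def]
      rw [Finset.prod_mul_distrib, ← map_prod]
    rw [this, map_sum]
    apply Finset.sum_congr rfl
    intro i _
    rw [PowerSeries.coeff_smul, smul_eq_mul]
  rw [Finset.sum_congr rfl hstep, Finset.sum_comm]
  -- Step D : per i, identify finite sum with tsum
  apply Finset.sum_congr rfl
  intro i _
  rw [← Finset.mul_sum]
  by_cases hc : (∏ j, dd (Q j) (s j) (i j)) = 0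
  · rw [hc, zero_mul, zero_mul]
  · congr 1
    -- the tsum has support in SS l m since i ⟨0,_⟩ ≥ 1
    rw [tsum_eq_SS]
    intro x h hm
    have hi : 1 ≤ i ⟨0, h⟩ := by
      by_contra hi
      have : i ⟨0, h⟩ = 0 := by omega
      apply hc
      apply Finset.prod_eq_zero (Finset.mem_univ ⟨0, h⟩)
      rw [this, dd_zero, h0 h]
    set n := x.1 ⟨0, h⟩
    apply prod_vanish _ ⟨0, h⟩ hm
      (Finv n * ((PowerSeries.X : PowerSeries ℚ) ^ n * Finv n) ^ (i ⟨0, h⟩ - 1))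
    conv_lhs => rw [show i ⟨0,h⟩ = (i ⟨0,h⟩ - 1) + 1 by omega, pow_succ]
    ring

lemma zetaSZ_eq_zetaQ (l : ℕ) (s : Fin l → ℕ) :
    zetaSZ l s = zetaQ l (fun j => max (s j) 1)
      (fun j => if s j = 0 then 1 - Polynomial.X else Polynomial.X ^ (s j)) := by
  rw [zetaSZ, zetaQ, zetaQ]
  funext m
  apply tsum_congr
  intro x
  congr 1
  apply Finset.prod_congr rfl
  intro j _
  by_cases hj : s j = 0
  · rw [if_pos hj, hj]
    simp only [pow_zero, map_one, one_mul, Nat.zero_max, pow_one, map_sub, Polynomial.aeval_X]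
    exact (hBinv (x.2.2 j)).symm
  · rw [if_neg hj, Nat.max_eq_left (by omega)]

lemma sz_mem_span (l : ℕ) (s : Fin l → ℕ) (Q : Fin l → Polynomial ℚ)
    (hdeg : ∀ j, (Q j).natDegree ≤ s j) (h0 : ∀ h : 0 < l, (Q ⟨0, h⟩).coeff 0 = 0)
    (P : (Fin l → ℕ) → Prop)
    (hP : ∀ i : Fin l → ℕ, (∀ j, i j ∈ range (s j + 1)) → (∏ j, dd (Q j) (s j) (i j)) ≠ 0 → P i)
    (T : Set (PowerSeries ℚ)) (hT : ∀ i : Fin l → ℕ, P i → zetaSZ l i ∈ T) :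
    zetaQ l s Q ∈ Submodule.span ℚ T := by
  rw [zetaQ_expand l s Q hdeg h0]
  apply Submodule.sum_mem
  intro i hi
  by_cases hc : (∏ j, dd (Q j) (s j) (i j)) = 0
  · rw [hc, zero_smul]; exact Submodule.zero_mem _
  · exact Submodule.smul_mem _ _ (Submodule.subset_span
      (hT i (hP i (fun j => (Fintype.mem_piFinset.mp hi) j) hc)))

end Aux

/-- Z_q is spanned by the ζ^SZ_q(s_1,…,s_l) with s_1 ≥ 1, s_2,…,s_l ≥ 0, and
Z_q° is spanned by the ζ^SZ_q(s_1,…,s_l) with all s_j ≥ 1. -/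
theorem Zq_Zqc_eq_span_SZ :
    Zq = Submodule.span ℚ {f | ∃ (l : ℕ) (s : Fin l → ℕ),
      (∀ h : 0 < l, 1 ≤ s ⟨0, h⟩) ∧ f = zetaSZ l s} ∧
    Zqc = Submodule.span ℚ {f | ∃ (l : ℕ) (s : Fin l → ℕ),
      (∀ j, 1 ≤ s j) ∧ f = zetaSZ l s} := by

  constructor
  · apply le_antisymm
    · rw [Zq, Submodule.span_le]
      rintro f ⟨l, s, Q, hs, hdeg, h0, rfl⟩
      apply sz_mem_span l s Q hdeg h0 (fun i => ∀ h : 0 < l, 1 ≤ i ⟨0, h⟩)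
      · intro i _ hc h
        by_contra hlt
        apply hc
        apply Finset.prod_eq_zero (Finset.mem_univ ⟨0, h⟩)
        rw [show i ⟨0,h⟩ = 0 by omega, dd_zero, h0 h]
      · intro i hPi
        exact ⟨l, i, hPi, rfl⟩
    · rw [Submodule.span_le]
      rintro f ⟨l, s, hs, rfl⟩
      apply Submodule.subset_span
      refine ⟨l, (fun j => max (s j) 1),
        (fun j => if s j = 0 then 1 - Polynomial.X else Polynomial.X ^ (s j)),
        fun j => le_max_right _ _, ?_, ?_, zetaSZ_eq_zetaQ l s⟩
      · intro j
        simp only []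
        by_cases hj : s j = 0
        · rw [if_pos hj, hj]
          have h1 : (1 - Polynomial.X : Polynomial ℚ) = -(Polynomial.X - Polynomial.C 1) := by
            rw [Polynomial.C_1]; ring
          rw [h1, Polynomial.natDegree_neg, Polynomial.natDegree_X_sub_C]
          exact le_max_right _ _
        · rw [if_neg hj, Polynomial.natDegree_X_pow]
          exact le_max_left _ _
      · intro h
        simp only []
        rw [if_neg (by have := hs h; omega), Polynomial.coeff_X_pow, if_neg (by have := hs h; omega)]
  · apply le_antisymm
    · rw [Zqc, Submodule.span_le]
      rintro f ⟨l, s, Q, hs, hdeg, h0, rfl⟩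
      apply sz_mem_span l s Q hdeg (fun h => h0 _) (fun i => ∀ j, 1 ≤ i j)
      · intro i _ hc j
        by_contra hlt
        apply hc
        apply Finset.prod_eq_zero (Finset.mem_univ j)
        rw [show i j = 0 by omega, dd_zero, h0 j]
      · intro i hPi
        exact ⟨l, i, hPi, rfl⟩
    · rw [Submodule.span_le]
      rintro f ⟨l, s, hs, rfl⟩
      apply Submodule.subset_span
      refine ⟨l, s, (fun j => Polynomial.X ^ (s j)), hs, ?_, ?_, rfl⟩
      · intro j; rw [Polynomial.natDegree_X_pow]
      · intro j; rw [Polynomial.coeff_X_pow, if_neg (by have := hs j; omega)]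
end

section
/- For s ≥ 2 let Q^O_s(t) = t^{s/2} if s is even and Q^O_s(t) = t^{(s−1)/2}(1+t) if s is odd, and set Z^O(s_1,…,s_l) = ζ_q(s_1,…,s_l; Q^O_{s_1},…,Q^O_{s_l}) (the Okounkov model). Then Z_q°[1] = ⟨ Z^O(s_1,…,s_l) : l ≥ 0, s_1,…,s_l ≥ 2 ⟩_ℚ. -/
/-- Okounkov's polynomials: Q^O_s(t) = t^{s/2} for even s and t^{(s−1)/2}(1+t) for odd s. -/
noncomputable def okounkovQ (s : ℕ) : Polynomial ℚ :=
  if Even s then Polynomial.X ^ (s / 2) else Polynomial.X ^ ((s - 1) / 2) * (1 + Polynomial.X)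

/-- The Okounkov model Z^O(s_1,…,s_l) = ζ_q(s_1,…,s_l; Q^O_{s_1},…,Q^O_{s_l}). -/
noncomputable def okounkovZ (l : ℕ) (s : Fin l → ℕ) : PowerSeries ℚ :=
  zetaQ l s fun j => okounkovQ (s j)

/-- Z_q°[1]: the ℚ-span of the ζ_q(s_1,…,s_l;Q_1,…,Q_l) with l ≥ 0, all s_j ≥ 1,
deg Q_j ≤ s_j − 1 (i.e. Q_j = 0 or natDegree Q_j + 1 ≤ s_j) and all Q_j ∈ tℚ[t]. -/
noncomputable def Zqc1 : Submodule ℚ (PowerSeries ℚ) :=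
  Submodule.span ℚ {f | ∃ (l : ℕ) (s : Fin l → ℕ) (Q : Fin l → Polynomial ℚ),
    (∀ j, 1 ≤ s j) ∧ (∀ j, Q j = 0 ∨ (Q j).natDegree + 1 ≤ s j) ∧
    (∀ j, (Q j).coeff 0 = 0) ∧ f = zetaQ l s Q}

section Auxiliary

open Polynomial Finset

lemma odd_three_le {s : ℕ} (hs : 2 ≤ s) (h : ¬ Even s) : 3 ≤ s := by
  rw [Nat.even_iff] at h; omega

lemma okounkovQ_coeff_zero {s : ℕ} (hs : 2 ≤ s) : (okounkovQ s).coeff 0 = 0 := by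
  unfold okounkovQ
  split_ifs with h
  · rw [Polynomial.coeff_X_pow]
    have : ¬ (0 = s / 2) := by omega
    simp [this]
  · have h3 : 3 ≤ s := odd_three_le hs h
    rw [mul_coeff_zero, Polynomial.coeff_X_pow]
    have : ¬ (0 = (s-1) / 2) := by omega
    simp [this]

lemma one_add_X_ne_zero : (1 + Polynomial.X : Polynomial ℚ) ≠ 0 := by
  intro hzero
  have h1X : (1 + Polynomial.X : Polynomial ℚ).natDegree = 1 := by
    rw [add_comm, ← Polynomial.C_1, natDegree_X_add_C]
  rw [hzero] at h1X; simp at h1X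

lemma okounkovQ_natDegree_le {s : ℕ} (hs : 2 ≤ s) : (okounkovQ s).natDegree + 1 ≤ s := by
  unfold okounkovQ
  split_ifs with h
  · rw [natDegree_X_pow]
    have := Nat.even_iff.mp h
    omega
  · have h3 : 3 ≤ s := odd_three_le hs h
    have h1X : (1 + Polynomial.X : Polynomial ℚ).natDegree = 1 := by
      rw [add_comm, ← Polynomial.C_1, natDegree_X_add_C]
    rw [natDegree_mul (pow_ne_zero _ Polynomial.X_ne_zero) one_add_X_ne_zero,
      natDegree_X_pow, h1X]
    have := Nat.even_iff.not.mp h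
    omega

lemma okounkovQ_eval_one (s : ℕ) : (okounkovQ s).eval 1 ≠ 0 := by
  unfold okounkovQ
  split_ifs <;> simp

lemma one_sub_X_eq : (1 - Polynomial.X : Polynomial ℚ) = -(Polynomial.X - Polynomial.C 1) := by
  rw [Polynomial.C_1]; ring

lemma one_sub_X_ne_zero : (1 - Polynomial.X : Polynomial ℚ) ≠ 0 := by
  rw [one_sub_X_eq, neg_ne_zero]
  exact Polynomial.X_sub_C_ne_zero 1

lemma one_sub_X_natDegree : (1 - Polynomial.X : Polynomial ℚ).natDegree = 1 := by
  rw [one_sub_X_eq, natDegree_neg, natDegree_X_sub_C]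

/-- Every polynomial `P` with `P(0) = 0` and `deg P ≤ s − 1` is a linear combination
of the polynomials `Q^O_k (1−X)^{s−k}` for `2 ≤ k ≤ s`. -/
lemma okounkov_decomp : ∀ (s : ℕ) (P : Polynomial ℚ), P.coeff 0 = 0 → P.natDegree + 1 ≤ s →
    ∃ c : ℕ → ℚ, P = ∑ k ∈ Finset.Icc 2 s, c k • (okounkovQ k * (1 - Polynomial.X) ^ (s - k)) := by
  intro s
  induction s with
  | zero => intro P _ h; omega
  | succ s ih =>
    intro P hP0 hPdeg
    rcases Nat.lt_or_ge s 1 with hs | hs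
    · interval_cases s
      have h0 : P.natDegree = 0 := by omega
      have : P = Polynomial.C (P.coeff 0) := Polynomial.eq_C_of_natDegree_eq_zero h0
      refine ⟨0, ?_⟩
      rw [this, hP0]
      simp
    · set cs : ℚ := P.eval 1 / (okounkovQ (s + 1)).eval 1 with hcs
      set P' : Polynomial ℚ := P - cs • okounkovQ (s + 1) with hP'
      have hroot : P'.IsRoot 1 := by
        simp only [IsRoot, hP', eval_sub, eval_smul, smul_eq_mul, hcs]
        rw [div_mul_cancel₀ _ (okounkovQ_eval_one (s+1))]
        ring
      set R : Polynomial ℚ := -(P' /ₘ (Polynomial.X - Polynomial.C 1)) with hR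
      have hfac : P' = (1 - Polynomial.X) * R := by
        have h := (Polynomial.mul_divByMonic_eq_iff_isRoot (p := P') (a := (1:ℚ))).2 hroot
        rw [Polynomial.C_1] at h
        rw [hR, Polynomial.C_1]
        linear_combination -h
      have hR0 : R.coeff 0 = 0 := by
        have h0 : P'.coeff 0 = 0 := by
          simp [hP', coeff_sub, hP0, okounkovQ_coeff_zero (by omega : 2 ≤ s + 1)]
        rw [hfac, mul_coeff_zero] at h0
        simpa using h0
      have hRdeg : R.natDegree + 1 ≤ s := by
        rcases eq_or_ne R 0 with h | h
        · rw [h]; simpa using hs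
        · have h2 : P'.natDegree ≤ s := by
            apply le_trans (natDegree_sub_le _ _)
            apply max_le (by omega)
            apply le_trans (natDegree_smul_le _ _)
            have := okounkovQ_natDegree_le (by omega : 2 ≤ s + 1)
            omega
          have h3 : P'.natDegree = 1 + R.natDegree := by
            rw [hfac, natDegree_mul one_sub_X_ne_zero h, one_sub_X_natDegree]
          omega
      obtain ⟨d, hd⟩ := ih R hR0 hRdeg
      refine ⟨Function.update d (s + 1) cs, ?_⟩
      have hins : Finset.Icc 2 (s + 1) = insert (s + 1) (Finset.Icc 2 s) :=
        (Finset.insert_Icc_right_eq_Icc_add_one (by omega)).symm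
      rw [hins, Finset.sum_insert (by simp)]
      have hupd1 : Function.update d (s + 1) cs (s + 1) = cs := Function.update_self _ _ _
      have hsum : ∑ k ∈ Finset.Icc 2 s, Function.update d (s + 1) cs k •
          (okounkovQ k * (1 - Polynomial.X) ^ (s + 1 - k)) =
          (1 - Polynomial.X) * ∑ k ∈ Finset.Icc 2 s, d k • (okounkovQ k * (1 - Polynomial.X) ^ (s - k)) := by
        rw [Finset.mul_sum]
        apply Finset.sum_congr rfl
        intro k hk
        rw [Finset.mem_Icc] at hk
        rw [Function.update_of_ne (by omega), mul_smul_comm]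
        congr 1
        have hsk : s + 1 - k = (s - k) + 1 := by omega
        rw [hsk, pow_succ]
        ring
      rw [hupd1, hsum, ← hd, ← hfac]
      simp only [Nat.sub_self, pow_zero, mul_one, hP']
      ring

lemma constCoeff_one_sub_pow {n : ℕ} (hn : 0 < n) :
    PowerSeries.constantCoeff (R := ℚ) (1 - PowerSeries.X ^ n) = 1 := by
  rw [map_sub, map_pow, map_one, PowerSeries.constantCoeff_X, zero_pow hn.ne', sub_zero]

lemma one_sub_pow_mul_inv {n : ℕ} (hn : 0 < n) :
    (1 - PowerSeries.X ^ n : PowerSeries ℚ) * (1 - PowerSeries.X ^ n)⁻¹ = 1 :=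
  PowerSeries.mul_inv_cancel _ (by rw [constCoeff_one_sub_pow hn]; exact one_ne_zero)

lemma pow_mul_inv_pow {n : ℕ} (hn : 0 < n) (a b : ℕ) :
    (1 - PowerSeries.X ^ n : PowerSeries ℚ) ^ a * ((1 - PowerSeries.X ^ n)⁻¹) ^ (a + b)
      = ((1 - PowerSeries.X ^ n)⁻¹) ^ b := by
  rw [pow_add, ← mul_assoc, ← mul_pow, one_sub_pow_mul_inv hn, one_pow, one_mul]

lemma slot_identity {n s k : ℕ} (hn : 0 < n) (hk : k ≤ s) (P : Polynomial ℚ) :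
    Polynomial.aeval ((PowerSeries.X : PowerSeries ℚ) ^ n) (P * (1 - Polynomial.X) ^ (s - k)) *
      ((1 - PowerSeries.X ^ n)⁻¹) ^ s
    = Polynomial.aeval ((PowerSeries.X : PowerSeries ℚ) ^ n) P * ((1 - PowerSeries.X ^ n)⁻¹) ^ k := by
  rw [map_mul, map_pow, map_sub, map_one, Polynomial.aeval_X, mul_assoc]
  congr 1
  have h2 := pow_mul_inv_pow (n := n) hn (s - k) k
  rw [Nat.sub_add_cancel hk] at h2
  exact h2

lemma coeff_prod_eq_zero {l : ℕ} (s : Fin l → ℕ) (Q : Fin l → Polynomial ℚ)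
    (hQ : ∀ j, (Q j).coeff 0 = 0) (m : ℕ) (n : Fin l → ℕ) (j : Fin l) (hj : m < n j) :
    PowerSeries.coeff (R := ℚ) m (∏ j', Polynomial.aeval (PowerSeries.X ^ (n j')) (Q j') *
      ((1 - PowerSeries.X ^ (n j'))⁻¹) ^ (s j')) = 0 := by
  obtain ⟨R, hRf⟩ := Polynomial.X_dvd_iff.2 (hQ j)
  have h1 : (PowerSeries.X : PowerSeries ℚ) ^ (n j) ∣
      Polynomial.aeval ((PowerSeries.X : PowerSeries ℚ) ^ (n j)) (Q j) := by
    rw [hRf, map_mul, Polynomial.aeval_X]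
    exact dvd_mul_right _ _
  have h2 := (h1.mul_right (((1 - PowerSeries.X ^ (n j))⁻¹ : PowerSeries ℚ) ^ (s j))).trans
    (Finset.dvd_prod_of_mem
      (fun j' => Polynomial.aeval (PowerSeries.X ^ (n j')) (Q j') *
        ((1 - PowerSeries.X ^ (n j'))⁻¹) ^ (s j')) (Finset.mem_univ j))
  exact PowerSeries.X_pow_dvd_iff.1 h2 m hj

lemma finite_bdd (l m : ℕ) :
    {n : {n : Fin l → ℕ // StrictAnti n ∧ ∀ i, 0 < n i} | ∀ j, n.1 j ≤ m}.Finite := by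
  have h1 : {f : Fin l → ℕ | ∀ j, f j ≤ m}.Finite := by
    apply (Set.Finite.pi (fun _ : Fin l => Set.finite_Iic m)).subset
    intro f hf
    simp only [Set.mem_pi, Set.mem_univ, Set.mem_Iic, forall_true_left]
    exact fun j => hf j
  exact Set.Finite.preimage (Subtype.val_injective.injOn) h1

lemma zeta_expansion (l : ℕ) (s : Fin l → ℕ) (Q : Fin l → Polynomial ℚ)
    (hQ0 : ∀ j, (Q j).coeff 0 = 0)
    (K : Fin l → Finset ℕ) (hK2 : ∀ j k, k ∈ K j → 2 ≤ k) (c : Fin l → ℕ → ℚ)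
    (h : ∀ (j : Fin l) (n : ℕ), 0 < n →
      Polynomial.aeval ((PowerSeries.X : PowerSeries ℚ) ^ n) (Q j) *
          ((1 - PowerSeries.X ^ n)⁻¹) ^ (s j)
        = ∑ k ∈ K j, c j k • (Polynomial.aeval ((PowerSeries.X : PowerSeries ℚ) ^ n) (okounkovQ k) *
            ((1 - PowerSeries.X ^ n)⁻¹) ^ k)) :
    zetaQ l s Q = ∑ κ ∈ Fintype.piFinset K, (∏ j, c j (κ j)) • zetaQ l κ (fun j => okounkovQ (κ j)) := by
  apply PowerSeries.ext
  intro m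
  classical
  set T := (finite_bdd l m).toFinset with hT
  have hmemT : ∀ n : {n : Fin l → ℕ // StrictAnti n ∧ ∀ i, 0 < n i},
      n ∉ T → ∃ j, m < n.1 j := by
    intro n hn
    rw [hT, Set.Finite.mem_toFinset, Set.mem_setOf_eq] at hn
    push_neg at hn
    obtain ⟨j, hj⟩ := hn
    exact ⟨j, by omega⟩
  have key : ∀ n : {n : Fin l → ℕ // StrictAnti n ∧ ∀ i, 0 < n i},
      (PowerSeries.coeff m) (∏ j, Polynomial.aeval (PowerSeries.X ^ (n.1 j)) (Q j) *
          ((1 - PowerSeries.X ^ (n.1 j) : PowerSeries ℚ)⁻¹) ^ (s j))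
      = ∑ κ ∈ Fintype.piFinset K, (∏ j, c j (κ j)) *
          (PowerSeries.coeff m) (∏ j, Polynomial.aeval (PowerSeries.X ^ (n.1 j)) (okounkovQ (κ j)) *
            ((1 - PowerSeries.X ^ (n.1 j) : PowerSeries ℚ)⁻¹) ^ (κ j)) := by
    intro n
    have hprod : (∏ j, Polynomial.aeval (PowerSeries.X ^ (n.1 j)) (Q j) *
          ((1 - PowerSeries.X ^ (n.1 j) : PowerSeries ℚ)⁻¹) ^ (s j))
        = ∑ κ ∈ Fintype.piFinset K, ∏ j, c j (κ j) •
            (Polynomial.aeval (PowerSeries.X ^ (n.1 j)) (okounkovQ (κ j)) *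
              ((1 - PowerSeries.X ^ (n.1 j) : PowerSeries ℚ)⁻¹) ^ (κ j)) := by
      calc (∏ j, Polynomial.aeval (PowerSeries.X ^ (n.1 j)) (Q j) *
          ((1 - PowerSeries.X ^ (n.1 j) : PowerSeries ℚ)⁻¹) ^ (s j))
          = ∏ j, ∑ k ∈ K j, c j k • (Polynomial.aeval (PowerSeries.X ^ (n.1 j)) (okounkovQ k) *
              ((1 - PowerSeries.X ^ (n.1 j) : PowerSeries ℚ)⁻¹) ^ k) :=
            Finset.prod_congr rfl fun j _ => h j (n.1 j) (n.2.2 j)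
        _ = _ := Finset.prod_univ_sum K fun j k => c j k •
              (Polynomial.aeval (PowerSeries.X ^ (n.1 j)) (okounkovQ k) *
                ((1 - PowerSeries.X ^ (n.1 j) : PowerSeries ℚ)⁻¹) ^ k)
    rw [hprod, map_sum]
    refine Finset.sum_congr rfl fun κ _ => ?_
    simp only [PowerSeries.smul_eq_C_mul]
    rw [Finset.prod_mul_distrib, ← map_prod, PowerSeries.coeff_C_mul]
  have hQside : (PowerSeries.coeff m) (zetaQ l s Q)
      = ∑ κ ∈ Fintype.piFinset K, ∑ n ∈ T, (∏ j, c j (κ j)) *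
          (PowerSeries.coeff m) (∏ j, Polynomial.aeval (PowerSeries.X ^ (n.1 j)) (okounkovQ (κ j)) *
            ((1 - PowerSeries.X ^ (n.1 j) : PowerSeries ℚ)⁻¹) ^ (κ j)) := by
    rw [zetaQ, PowerSeries.coeff_mk]
    rw [tsum_eq_sum (s := T) (fun n hn => by
      obtain ⟨j, hj⟩ := hmemT n hn
      exact coeff_prod_eq_zero s Q hQ0 m n.1 j hj)]
    rw [Finset.sum_congr rfl fun n _ => key n]
    exact Finset.sum_comm
  rw [hQside, map_sum]
  refine Finset.sum_congr rfl fun κ hκ => ?_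
  have hκ2 : ∀ j, 2 ≤ κ j := fun j => hK2 j (κ j) ((Fintype.mem_piFinset.1 hκ) j)
  rw [PowerSeries.coeff_smul, smul_eq_mul, zetaQ, PowerSeries.coeff_mk]
  rw [tsum_eq_sum (s := T) (fun n hn => by
    obtain ⟨j, hj⟩ := hmemT n hn
    exact coeff_prod_eq_zero κ (fun j => okounkovQ (κ j))
      (fun j => okounkovQ_coeff_zero (hκ2 j)) m n.1 j hj)]
  rw [Finset.mul_sum]

end Auxiliary

/-- Z_q°[1] equals the ℚ-span of the Okounkov model Z^O(s_1,…,s_l) with all s_j ≥ 2. -/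
theorem Zqc1_eq_span_okounkov :
    Zqc1 = Submodule.span ℚ {f | ∃ (l : ℕ) (s : Fin l → ℕ),
      (∀ j, 2 ≤ s j) ∧ f = okounkovZ l s} := by
  apply le_antisymm
  · rw [Zqc1, Submodule.span_le]
    rintro f ⟨l, s, Q, hs1, hdeg, h0, rfl⟩
    have hdec : ∀ j : Fin l, ∃ c : ℕ → ℚ,
        Q j = ∑ k ∈ Finset.Icc 2 (s j), c k • (okounkovQ k * (1 - Polynomial.X) ^ (s j - k)) := by
      intro j
      rcases hdeg j with h | h
      · exact ⟨0, by simp [h]⟩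
      · exact okounkov_decomp (s j) (Q j) (h0 j) h
    choose c hc using hdec
    have hexp := zeta_expansion l s Q h0 (fun j => Finset.Icc 2 (s j))
      (fun j k hk => (Finset.mem_Icc.1 hk).1) c ?_
    · rw [SetLike.mem_coe, hexp]
      apply Submodule.sum_mem
      intro κ hκ
      apply Submodule.smul_mem
      apply Submodule.subset_span
      exact ⟨l, κ, fun j => (Finset.mem_Icc.1 ((Fintype.mem_piFinset.1 hκ) j)).1, rfl⟩
    · intro j n hn
      conv_lhs => rw [hc j]
      rw [map_sum, Finset.sum_mul]
      refine Finset.sum_congr rfl fun k hk => ?_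
      rw [map_smul, smul_mul_assoc]
      congr 1
      exact slot_identity hn (Finset.mem_Icc.1 hk).2 (okounkovQ k)
  · rw [Submodule.span_le]
    rintro f ⟨l, s, hs2, rfl⟩
    rw [SetLike.mem_coe, Zqc1]
    apply Submodule.subset_span
    exact ⟨l, s, fun j => okounkovQ (s j), fun j => by have := hs2 j; omega,
      fun j => Or.inr (okounkovQ_natDegree_le (hs2 j)),
      fun j => okounkovQ_coeff_zero (hs2 j), rfl⟩
end
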